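/- Let (R,m,k) be an Artinian local ring possessing a canonical module ω, and suppose that 2·dim_k socle(R) > ℓ(R). If Ext_R^i(ω,R) = 0 for 1 ≤ i ≤ μ(ω), then R is Gorenstein. -/

import Mathlib

open IsLocalRing

universe u v

/-- `d`, `ε` form a minimal free resolution of the `R`-module `M`,
with `i`-th Betti number `b i`. -/
def IsMinFreeRes (R : Type u) [CommRing R] [IsLocalRing R]
    (M : Type v) [AddCommGroup M] [Module R M] (b : ℕ → ℕ)
    (d : ∀ i : ℕ, ((Fin (b (i+1)) → R) →ₗ[R] (Fin (b i) → R)))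
    (ε : (Fin (b 0) → R) →ₗ[R] M) : Prop :=
  Function.Surjective ε ∧ Function.Exact (d 0) ε ∧
  (∀ i, Function.Exact (d (i+1)) (d i)) ∧
  (∀ i, LinearMap.range (d i) ≤ (maximalIdeal R) • (⊤ : Submodule R (Fin (b i) → R)))

/-- `b` is the sequence of Betti numbers of the `R`-module `M`. -/
def HasBettiSeq (R : Type u) [CommRing R] [IsLocalRing R]
    (M : Type v) [AddCommGroup M] [Module R M] (b : ℕ → ℕ) : Prop :=
  ∃ d ε, IsMinFreeRes R M b d ε

/-- The depth of a module: the supremum of lengths of `M`-regular sequences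
contained in the maximal ideal. -/
noncomputable def mdepth (R : Type u) [CommRing R] [IsLocalRing R]
    (M : Type v) [AddCommGroup M] [Module R M] : ℕ∞ :=
  sSup {n : ℕ∞ | ∃ rs : List R, (rs.length : ℕ∞) = n ∧ (∀ r ∈ rs, r ∈ maximalIdeal R) ∧
    RingTheory.Sequence.IsRegular M rs}

/-- The (Krull) dimension of a module. -/
noncomputable def mdim (R : Type u) [CommRing R]
    (M : Type v) [AddCommGroup M] [Module R M] : WithBot ℕ∞ :=
  ringKrullDim (R ⧸ Module.annihilator R M)

/-- The length of a module. -/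
noncomputable def mlength (R : Type u) [CommRing R]
    (M : Type v) [AddCommGroup M] [Module R M] : ℕ∞ :=
  sSup {n : ℕ∞ | ∃ c : RelSeries (α := Submodule R M) {p : Submodule R M × Submodule R M | p.1 < p.2}, (c.length : ℕ∞) = n}

/-- The minimal number of generators of a module. -/
noncomputable def mu (R : Type u) [CommRing R]
    (M : Type v) [AddCommGroup M] [Module R M] : ℕ :=
  sInf {n | ∃ s : Fin n → M, Submodule.span R (Set.range s) = ⊤}

/-- A Cohen--Macaulay local ring: Noetherian local with `depth = dim`. -/
def IsCMLocalRing (R : Type u) [CommRing R] [IsLocalRing R] : Prop :=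
  IsNoetherianRing R ∧ (mdepth R R : WithBot ℕ∞) = ringKrullDim R

/-- A Cohen--Macaulay module of dimension `d`. -/
def IsCMModOfDim (R : Type u) [CommRing R] [IsLocalRing R]
    (M : Type v) [AddCommGroup M] [Module R M] (d : ℕ) : Prop :=
  Module.Finite R M ∧ mdepth R M = (d : ℕ∞) ∧ mdim R M = (d : WithBot ℕ∞)

/-- A maximal Cohen--Macaulay module. -/
def IsMCMMod (R : Type u) [CommRing R] [IsLocalRing R]
    (M : Type v) [AddCommGroup M] [Module R M] : Prop :=
  Module.Finite R M ∧ (mdepth R M : WithBot ℕ∞) = ringKrullDim R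

/-- `M` has finite injective dimension over `R`. -/
def HasFiniteInjDim (R : Type u) [CommRing R]
    (M : Type v) [AddCommGroup M] [Module R M] : Prop :=
  ∃ (n : ℕ) (I : ℕ → ModuleCat.{v} R) (d : ∀ i, I i →ₗ[R] I (i+1)) (ε : M →ₗ[R] I 0),
    Function.Injective ε ∧ (∀ i, Module.Injective R (I i)) ∧
    Function.Exact ε (d 0) ∧ (∀ i, Function.Exact (d i) (d (i+1))) ∧
    (∀ i, n < i → Subsingleton (I i))

/-- `ω` is a canonical module of the local ring `R`: a maximal Cohen--Macaulay module
of finite injective dimension such that the natural map `R → Hom_R(ω, ω)` is an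
isomorphism. -/
def IsCanonicalModule (R : Type u) [CommRing R] [IsLocalRing R]
    (ω : Type v) [AddCommGroup ω] [Module R ω] : Prop :=
  IsMCMMod R ω ∧ HasFiniteInjDim R ω ∧
    Function.Bijective (algebraMap R (Module.End R ω))

/-- A Gorenstein local ring: Noetherian, of finite injective dimension over itself. -/
def IsGorensteinLocalRing (R : Type u) [CommRing R] [IsLocalRing R] : Prop :=
  IsNoetherianRing R ∧ HasFiniteInjDim R R

/-- A sequence of natural numbers grows exponentially. -/
def ExpGrowth (b : ℕ → ℕ) : Prop :=
  ∃ α β : ℝ, 1 < α ∧ α < β ∧ ∀ᶠ n in Filter.atTop, α ^ n < (b n : ℝ) ∧ (b n : ℝ) < β ^ n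

/-- A sequence of natural numbers is eventually strictly increasing. -/
def EvStrictIncr (b : ℕ → ℕ) : Prop := ∃ N, ∀ n, N ≤ n → b n < b (n+1)

/-- `Ext^{i+1}_R(M, N) = 0`, computed via minimal free resolutions of `M`. -/
def ExtVanishesSucc (R : Type u) [CommRing R] [IsLocalRing R]
    (M : Type u) [AddCommGroup M] [Module R M]
    (N : Type u) [AddCommGroup N] [Module R N] (i : ℕ) : Prop :=
  ∀ (b : ℕ → ℕ) (d : ∀ i : ℕ, ((Fin (b (i+1)) → R) →ₗ[R] (Fin (b i) → R)))
    (ε : (Fin (b 0) → R) →ₗ[R] M), IsMinFreeRes R M b d ε →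
    ∀ g : (Fin (b (i+1)) → R) →ₗ[R] N, g.comp (d (i+1)) = 0 →
      ∃ h : (Fin (b i) → R) →ₗ[R] N, g = h.comp (d i)

/-- `Tor_{i+1}^R(M, N) = 0`, computed via minimal free resolutions of `M`. -/
def TorVanishesSucc (R : Type u) [CommRing R] [IsLocalRing R]
    (M : Type u) [AddCommGroup M] [Module R M]
    (N : Type u) [AddCommGroup N] [Module R N] (i : ℕ) : Prop :=
  ∀ (b : ℕ → ℕ) (d : ∀ i : ℕ, ((Fin (b (i+1)) → R) →ₗ[R] (Fin (b i) → R)))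
    (ε : (Fin (b 0) → R) →ₗ[R] M), IsMinFreeRes R M b d ε →
    Function.Exact (LinearMap.rTensor N (d (i+1))) (LinearMap.rTensor N (d i))

universe w

section MLength

variable {R : Type u} [CommRing R]
variable {M : Type v} [AddCommGroup M] [Module R M]
variable {N : Type w} [AddCommGroup N] [Module R N]

lemma mlength_eq_iSup :
    mlength R M = ⨆ c : LTSeries (Submodule R M), (c.length : ℕ∞) := by
  rw [mlength, iSup]
  rfl

lemma length_le_mlength (c : LTSeries (Submodule R M)) :
    (c.length : ℕ∞) ≤ mlength R M := le_sSup ⟨c, rfl⟩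

lemma mlength_le_iff {x : ℕ∞} :
    mlength R M ≤ x ↔ ∀ c : LTSeries (Submodule R M), (c.length : ℕ∞) ≤ x := by
  rw [mlength_eq_iSup]; exact iSup_le_iff

lemma mlength_le_of_injective (f : M →ₗ[R] N) (hf : Function.Injective f) :
    mlength R M ≤ mlength R N := by
  rw [mlength_le_iff]
  intro c
  exact length_le_mlength (c.map (Submodule.map f) (Submodule.map_strictMono_of_injective hf))

lemma mlength_eq_of_equiv (e : M ≃ₗ[R] N) : mlength R M = mlength R N :=
  le_antisymm (mlength_le_of_injective e.toLinearMap e.injective)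
    (mlength_le_of_injective e.symm.toLinearMap e.symm.injective)

lemma mlength_subsingleton [Subsingleton M] : mlength R M = 0 := by
  refine le_antisymm ?_ zero_le
  rw [mlength_le_iff]
  intro c
  have : Subsingleton (Submodule R M) := by
    constructor
    intro a b
    ext x
    simp [Subsingleton.elim x 0]
  rcases h : c.length with _ | n
  · simp
  · exact absurd (Subsingleton.elim (c ⟨0, by omega⟩) (c ⟨1, by omega⟩))
      (ne_of_lt (c.strictMono (show (⟨0, by omega⟩ : Fin (c.length+1)) < ⟨1, by omega⟩ by simp [Fin.lt_def])))

end MLength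


section Extraction
variable {α : Type u} {β : Type v} [PartialOrder α] [PartialOrder β]

lemma extraction : ∀ (n : ℕ) (f : Fin (n+1) → α) (g : Fin (n+1) → β),
    Monotone f → Monotone g →
    (∀ i : Fin n, f i.castSucc < f i.succ ∨ g i.castSucc < g i.succ) →
    ∃ (ca : LTSeries α) (cb : LTSeries β), n ≤ ca.length + cb.length ∧
      ca.last = f (Fin.last n) ∧ cb.last = g (Fin.last n) := by
  intro n
  induction n with
  | zero =>
    intro f g _ _ _
    exact ⟨RelSeries.singleton _ (f 0), RelSeries.singleton _ (g 0), le_refl 0, rfl, rfl⟩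
  | succ n ih =>
    intro f g hf hg hd
    obtain ⟨ca, cb, hlen, hla, hlb⟩ :=
      ih (f ∘ Fin.castSucc) (g ∘ Fin.castSucc)
        (hf.comp (Fin.strictMono_castSucc).monotone)
        (hg.comp (Fin.strictMono_castSucc).monotone)
        (fun i => by
          have := hd i.castSucc
          simpa only [Function.comp_apply, Fin.succ_castSucc] using this)
    have hfl : f (Fin.last n).castSucc ≤ f (Fin.last (n+1)) := hf (Fin.castSucc_lt_last _).le
    have hgl : g (Fin.last n).castSucc ≤ g (Fin.last (n+1)) := hg (Fin.castSucc_lt_last _).le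
    have hdl := hd (Fin.last n)
    rw [Fin.succ_last] at hdl
    -- helper to extend a chain
    have step : ∀ (c : LTSeries α) (x y : α), c.last = x → x ≤ y →
        ∃ c' : LTSeries α, c'.last = y ∧ c.length ≤ c'.length ∧
          (x < y → c.length + 1 ≤ c'.length) := by
      intro c x y hc hxy
      rcases lt_or_eq_of_le hxy with hlt | heq
      · exact ⟨c.snoc y (hc ▸ hlt), RelSeries.last_snoc _ _ _, by simp,
          fun _ => by simp⟩
      · exact ⟨c, heq ▸ hc, le_refl _, fun h => absurd heq h.ne⟩
    have stepβ : ∀ (c : LTSeries β) (x y : β), c.last = x → x ≤ y →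
        ∃ c' : LTSeries β, c'.last = y ∧ c.length ≤ c'.length ∧
          (x < y → c.length + 1 ≤ c'.length) := by
      intro c x y hc hxy
      rcases lt_or_eq_of_le hxy with hlt | heq
      · exact ⟨c.snoc y (hc ▸ hlt), RelSeries.last_snoc _ _ _, by simp,
          fun _ => by simp⟩
      · exact ⟨c, heq ▸ hc, le_refl _, fun h => absurd heq h.ne⟩
    obtain ⟨ca', hca', h1, h1'⟩ := step ca _ _ hla hfl
    obtain ⟨cb', hcb', h2, h2'⟩ := stepβ cb _ _ hlb hgl
    refine ⟨ca', cb', ?_, hca', hcb'⟩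
    rcases hdl with h | h
    · have := h1' h
      omega
    · have := h2' h
      omega
end Extraction

section Dirs
variable {R : Type u} [CommRing R]
variable {M : Type v} [AddCommGroup M] [Module R M]
variable {N : Type w} [AddCommGroup N] [Module R N]

lemma exists_extend {α : Type*} [PartialOrder α] [BoundedOrder α] (c : LTSeries α) :
    ∃ c' : LTSeries α, c.length ≤ c'.length ∧ c'.head = ⊥ ∧ c'.last = ⊤ := by
  rcases eq_or_ne c.head ⊥ with h | h
  · rcases eq_or_ne c.last ⊤ with h2 | h2
    · exact ⟨c, le_refl _, h, h2⟩
    · exact ⟨c.snoc ⊤ (lt_top_iff_ne_top.2 h2), by simp only [RelSeries.snoc_length]; omega, by simpa, by simp⟩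
  · rcases eq_or_ne c.last ⊤ with h2 | h2
    · exact ⟨c.cons ⊥ (bot_lt_iff_ne_bot.2 h), by simp only [RelSeries.cons_length]; omega, by simp, by simpa⟩
    · have hrel : (c.cons ⊥ (bot_lt_iff_ne_bot.2 h)).last < ⊤ := by
        rw [RelSeries.last_cons]
        exact lt_top_iff_ne_top.2 h2
      refine ⟨(c.cons ⊥ (bot_lt_iff_ne_bot.2 h)).snoc ⊤ hrel, ?_, ?_, ?_⟩
      · simp only [RelSeries.snoc_length, RelSeries.cons_length]; omega
      · simp
      · simp

lemma mlength_ker_add_range (f : M →ₗ[R] N) :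
    mlength R ↥(LinearMap.ker f) + mlength R ↥(LinearMap.range f) ≤ mlength R M := by
  rw [mlength_eq_iSup (M := ↥(LinearMap.ker f)), mlength_eq_iSup (M := ↥(LinearMap.range f))]
  have h1 : Nonempty (LTSeries (Submodule R ↥(LinearMap.ker f))) := ⟨RelSeries.singleton _ ⊥⟩
  have h2 : Nonempty (LTSeries (Submodule R ↥(LinearMap.range f))) := ⟨RelSeries.singleton _ ⊥⟩
  refine ENat.iSup_add_iSup_le fun ca cb => ?_
  obtain ⟨ca', hca, -, hlast⟩ := exists_extend ca
  obtain ⟨cb', hcb, hhead, -⟩ := exists_extend cb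
  let p := ca'.map (Submodule.map (LinearMap.ker f).subtype)
      (Submodule.map_strictMono_of_injective (Submodule.injective_subtype _))
  let q := cb'.map (Submodule.comap f.rangeRestrict)
      (Submodule.comap_strictMono_of_surjective f.surjective_rangeRestrict)
  have hconn : p.last = q.head := by
    show Submodule.map _ ca'.last = Submodule.comap _ cb'.head
    rw [hlast, hhead, Submodule.map_top, Submodule.range_subtype, Submodule.comap_bot,
      LinearMap.ker_rangeRestrict]
  have hle := length_le_mlength (p.smash q hconn)
  have hl : (p.smash q hconn).length = ca'.length + cb'.length := rfl
  rw [hl] at hle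
  calc (ca.length : ℕ∞) + cb.length ≤ ((ca'.length + cb'.length : ℕ) : ℕ∞) := by
        exact_mod_cast add_le_add (Nat.cast_le.2 hca) (Nat.cast_le.2 hcb)
    _ ≤ _ := hle

lemma mlength_le_ker_add_range (f : M →ₗ[R] N) :
    mlength R M ≤ mlength R ↥(LinearMap.ker f) + mlength R ↥(LinearMap.range f) := by
  rw [mlength_le_iff]
  intro c
  set A : Fin (c.length + 1) → Submodule R ↥(LinearMap.ker f) :=
    fun i => Submodule.comap (LinearMap.ker f).subtype (c i) with hA
  set B : Fin (c.length + 1) → Submodule R ↥(LinearMap.range f) :=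
    fun i => Submodule.map f.rangeRestrict (c i) with hB
  have hAm : Monotone A := fun i j hij => Submodule.comap_mono (c.monotone hij)
  have hBm : Monotone B := fun i j hij => Submodule.map_mono (c.monotone hij)
  have hdisj : ∀ i : Fin c.length, A i.castSucc < A i.succ ∨ B i.castSucc < B i.succ := by
    intro i
    by_contra hcon
    push_neg at hcon
    obtain ⟨hA1, hB1⟩ := hcon
    have hAeq : A i.castSucc = A i.succ :=
      ((hAm (Fin.castSucc_le_succ i)).lt_or_eq).resolve_left hA1
    have hBeq : B i.castSucc = B i.succ :=
      ((hBm (Fin.castSucc_le_succ i)).lt_or_eq).resolve_left hB1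
    refine (show c i.castSucc < c i.succ from c.step i).not_ge ?_
    intro x hx
    -- f.rangeRestrict x ∈ B i.succ = B i.castSucc
    have hx' : f.rangeRestrict x ∈ Submodule.map f.rangeRestrict (c i.castSucc) := by
      rw [show Submodule.map f.rangeRestrict (c i.castSucc) = B i.castSucc from rfl, hBeq]
      exact Submodule.mem_map_of_mem hx
    obtain ⟨y, hy, hyx⟩ := hx'
    have hfyx : f y = f x := congrArg Subtype.val hyx
    have hxy : x - y ∈ LinearMap.ker f := by
      simp [LinearMap.mem_ker, map_sub, hfyx]
    have hxyc : x - y ∈ c i.succ :=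
      Submodule.sub_mem _ hx (c.monotone (Fin.castSucc_le_succ i) hy)
    have : (⟨x - y, hxy⟩ : ↥(LinearMap.ker f)) ∈ A i.succ := hxyc
    rw [← hAeq] at this
    have : x - y ∈ c i.castSucc := this
    have : x ∈ c i.castSucc := by
      have := Submodule.add_mem _ this hy
      simpa using this
    exact this
  obtain ⟨ca, cb, hlen, -, -⟩ := extraction c.length A B hAm hBm hdisj
  calc (c.length : ℕ∞) ≤ ((ca.length + cb.length : ℕ) : ℕ∞) := Nat.cast_le.2 hlen
    _ ≤ _ := by
        push_cast
        exact add_le_add (length_le_mlength ca) (length_le_mlength cb)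

end Dirs

section Pi
variable {R : Type u} [CommRing R]
variable {S : Type u} [AddCommGroup S] [Module R S]

/-- kernel of "restrict to tail" is iso to `S`. -/
noncomputable def kerTailEquiv (n : ℕ) :
    ↥(LinearMap.ker (LinearMap.funLeft R S (Fin.succ : Fin n → Fin (n+1)))) ≃ₗ[R] S where
  toFun v := v.1 0
  map_add' _ _ := rfl
  map_smul' _ _ := rfl
  invFun s := ⟨Fin.cons s 0, by
    ext i
    simp [LinearMap.funLeft, Fin.cons_succ]⟩
  left_inv := by
    rintro ⟨v, hv⟩
    ext i
    refine Fin.cases ?_ ?_ i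
    · simp [Fin.cons_zero]
    · intro j
      have : v j.succ = 0 := congrFun (LinearMap.mem_ker.1 hv) j
      simp [Fin.cons_succ, this]
  right_inv s := by simp [Fin.cons_zero]

lemma mlength_top_equiv : mlength R ↥(⊤ : Submodule R S) = mlength R S :=
  mlength_eq_of_equiv Submodule.topEquiv

lemma mlength_pi_le : ∀ n : ℕ, mlength R (Fin n → S) ≤ n * mlength R S := by
  intro n
  induction n with
  | zero => rw [mlength_subsingleton]; simp
  | succ n ih =>
    set f := LinearMap.funLeft R S (Fin.succ : Fin n → Fin (n+1)) with hf
    have hsurj : Function.Surjective f :=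
      LinearMap.funLeft_surjective_of_injective _ _ _ (Fin.succ_injective n)
    have h1 : mlength R ↥(LinearMap.ker f) = mlength R S := mlength_eq_of_equiv (kerTailEquiv n)
    have h2 : mlength R ↥(LinearMap.range f) = mlength R (Fin n → S) := by
      rw [LinearMap.range_eq_top.2 hsurj, mlength_top_equiv]
    calc mlength R (Fin (n+1) → S)
        ≤ mlength R ↥(LinearMap.ker f) + mlength R ↥(LinearMap.range f) :=
          mlength_le_ker_add_range f
      _ = mlength R S + mlength R (Fin n → S) := by rw [h1, h2]
      _ ≤ mlength R S + n * mlength R S := add_le_add_right ih _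
      _ = (n+1 : ℕ) * mlength R S := by
          push_cast
          ring

lemma le_mlength_pi : ∀ n : ℕ, (n : ℕ∞) * mlength R S ≤ mlength R (Fin n → S) := by
  intro n
  induction n with
  | zero => simp
  | succ n ih =>
    set f := LinearMap.funLeft R S (Fin.succ : Fin n → Fin (n+1)) with hf
    have hsurj : Function.Surjective f :=
      LinearMap.funLeft_surjective_of_injective _ _ _ (Fin.succ_injective n)
    have h1 : mlength R ↥(LinearMap.ker f) = mlength R S := mlength_eq_of_equiv (kerTailEquiv n)
    have h2 : mlength R ↥(LinearMap.range f) = mlength R (Fin n → S) := by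
      rw [LinearMap.range_eq_top.2 hsurj, mlength_top_equiv]
    calc ((n+1 : ℕ) : ℕ∞) * mlength R S = mlength R S + (n : ℕ∞) * mlength R S := by
          push_cast
          ring
      _ ≤ mlength R S + mlength R (Fin n → S) := add_le_add_right ih _
      _ = mlength R ↥(LinearMap.ker f) + mlength R ↥(LinearMap.range f) := by rw [h1, h2]
      _ ≤ mlength R (Fin (n+1) → S) := mlength_ker_add_range f

end Pi

section Socle
variable {R : Type u} [CommRing R]
variable {M : Type v} [AddCommGroup M] [Module R M]

lemma smul_top_pi (I : Ideal R) (n : ℕ) :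
    I • (⊤ : Submodule R (Fin n → R)) = Submodule.pi Set.univ (fun _ => I) := by
  apply le_antisymm
  · refine Submodule.smul_le.2 fun r hr v _ => ?_
    intro i _
    exact Ideal.mul_mem_right _ _ hr
  · intro v hv
    have : v = ∑ i : Fin n, (v i) • (Pi.single (M := fun _ : Fin n => R) i (1 : R)) := by
      funext j
      rw [Finset.sum_apply]
      rw [Finset.sum_eq_single j]
      · simp
      · intro i _ hij
        simp [Pi.single_apply, Ne.symm hij]
      · simp
    rw [this]
    refine Submodule.sum_mem _ fun i _ => ?_
    exact Submodule.smul_mem_smul (hv i trivial) trivial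

/-- `↥(I^n) ≃ₗ (Fin n → ↥I)`. -/
noncomputable def piIdealEquiv (I : Ideal R) (n : ℕ) :
    ↥(Submodule.pi (Set.univ : Set (Fin n)) (fun _ => I)) ≃ₗ[R] (Fin n → ↥I) where
  toFun v := fun i => ⟨v.1 i, v.2 i trivial⟩
  map_add' _ _ := rfl
  map_smul' _ _ := rfl
  invFun w := ⟨fun i => (w i).1, fun i _ => (w i).2⟩
  left_inv v := rfl
  right_inv w := rfl

lemma socle_smul_eq_zero {J : Ideal R} {σ : R}
    (hσ : σ ∈ Submodule.colon (⊥ : Submodule R R) J) {y : M}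
    (hy : y ∈ J • (⊤ : Submodule R M)) : σ • y = 0 := by
  refine Submodule.smul_induction_on hy ?_ ?_
  · intro r hr z _
    rw [smul_smul]
    have : σ * r = 0 := by
      have := Submodule.mem_colon.1 hσ r hr
      simpa using this
    rw [this, zero_smul]
  · intro a b ha hb
    rw [smul_add, ha, hb, add_zero]

lemma smul_top_le_self (I : Ideal R) : I • (⊤ : Submodule R R) ≤ I :=
  Submodule.smul_le.2 fun r hr v _ => Ideal.mul_mem_right _ _ hr

end Socle


section MinCover
variable {R : Type u} [CommRing R] [IsLocalRing R]
variable {M : Type v} [AddCommGroup M] [Module R M]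

lemma span_remove {n : ℕ} (s : Fin n → M) (c : Fin n → R) (i₀ : Fin n)
    (hsum : ∑ i, c i • s i = 0) (hunit : IsUnit (c i₀))
    (hs : Submodule.span R (Set.range s) = ⊤) :
    ∃ t : Fin (n - 1) → M, Submodule.span R (Set.range t) = ⊤ := by
  rcases n with _ | k
  · exact i₀.elim0
  refine ⟨s ∘ i₀.succAbove, ?_⟩
  rw [eq_top_iff, ← hs, Submodule.span_le]
  rintro x ⟨i, rfl⟩
  by_cases h : i = i₀
  · subst h
    obtain ⟨u, hu⟩ := hunit
    have h1 : s i = ((u⁻¹ : Rˣ) : R) • (c i • s i) := by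
      rw [smul_smul, ← hu, Units.inv_mul, one_smul]
    have h2 : c i • s i = -∑ j : Fin k, c (i.succAbove j) • s (i.succAbove j) := by
      rw [Fin.sum_univ_succAbove (fun i' => c i' • s i') i] at hsum
      exact eq_neg_of_add_eq_zero_left hsum
    rw [h1, h2]
    exact Submodule.smul_mem _ _ (Submodule.neg_mem _ (Submodule.sum_mem _ fun j _ =>
      Submodule.smul_mem _ _ (Submodule.subset_span ⟨j, rfl⟩)))
  · obtain ⟨j, hj⟩ := Fin.exists_succAbove_eq h
    exact Submodule.subset_span ⟨j, by simp [hj]⟩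

lemma exists_min_cover (M : Type v) [AddCommGroup M] [Module R M] [Module.Finite R M] :
    ∃ f : (Fin (mu R M) → R) →ₗ[R] M, Function.Surjective f ∧
      LinearMap.ker f ≤ (maximalIdeal R) • (⊤ : Submodule R (Fin (mu R M) → R)) := by
  have hne : {n | ∃ s : Fin n → M, Submodule.span R (Set.range s) = ⊤}.Nonempty := by
    obtain ⟨n, s, hs⟩ := Module.Finite.exists_fin (R := R) (M := M)
    exact ⟨n, s, hs⟩
  obtain ⟨s, hs⟩ : ∃ s : Fin (mu R M) → M, Submodule.span R (Set.range s) = ⊤ :=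
    Nat.sInf_mem hne
  set f := Fintype.linearCombination R s with hf
  have hsurj : Function.Surjective f := by
    rw [← LinearMap.range_eq_top, Fintype.range_linearCombination, hs]
  refine ⟨f, hsurj, ?_⟩
  intro c hc
  rw [smul_top_pi]
  intro i₀ _
  by_contra hmem
  have hunit : IsUnit (c i₀) := by
    by_contra hu
    exact hmem (IsLocalRing.mem_maximalIdeal _ |>.2 hu)
  obtain ⟨t, ht⟩ := span_remove s c i₀ hc hunit hs
  have hle : mu R M ≤ mu R M - 1 := Nat.sInf_le ⟨t, ht⟩
  have hpos : 0 < mu R M := i₀.pos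
  omega
end MinCover


section Resolution
variable (R : Type u) [CommRing R] [IsLocalRing R] [IsNoetherianRing R]

instance submodFinite {n : ℕ} (K : Submodule R (Fin n → R)) : Module.Finite R ↥K :=
  Module.Finite.iff_fg.2 (IsNoetherian.noetherian K)

/-- A chosen minimal cover. -/
noncomputable def mcov (M : Type v) [AddCommGroup M] [Module R M] [Module.Finite R M] :
    (Fin (mu R M) → R) →ₗ[R] M :=
  (exists_min_cover M).choose

lemma mcov_surj (M : Type v) [AddCommGroup M] [Module R M] [Module.Finite R M] :
    Function.Surjective (mcov R M) := (exists_min_cover M).choose_spec.1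

lemma mcov_ker (M : Type v) [AddCommGroup M] [Module R M] [Module.Finite R M] :
    LinearMap.ker (mcov R M) ≤ (maximalIdeal R) • (⊤ : Submodule R (Fin (mu R M) → R)) :=
  (exists_min_cover M).choose_spec.2

variable (ω : Type u) [AddCommGroup ω] [Module R ω] [Module.Finite R ω]

noncomputable def resAux : ℕ → Σ n : ℕ, Submodule R (Fin n → R) := fun n =>
  Nat.rec ⟨mu R ω, LinearMap.ker (mcov R ω)⟩
    (fun _ p => ⟨mu R ↥p.2, LinearMap.ker (mcov R ↥p.2)⟩) n

noncomputable def resb (i : ℕ) : ℕ := (resAux R ω i).1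

noncomputable def resd (i : ℕ) :
    (Fin (resb R ω (i+1)) → R) →ₗ[R] (Fin (resb R ω i) → R) :=
  (resAux R ω i).2.subtype ∘ₗ (mcov R ↥(resAux R ω i).2)

lemma range_resd (i : ℕ) : LinearMap.range (resd R ω i) = (resAux R ω i).2 := by
  show LinearMap.range ((resAux R ω i).2.subtype ∘ₗ (mcov R ↥(resAux R ω i).2)) = (resAux R ω i).2
  rw [LinearMap.range_comp, LinearMap.range_eq_top.2 (mcov_surj R ↥(resAux R ω i).2),
    Submodule.map_top, Submodule.range_subtype]

lemma ker_resd (i : ℕ) : LinearMap.ker (resd R ω i) = (resAux R ω (i+1)).2 := by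
  show LinearMap.ker ((resAux R ω i).2.subtype ∘ₗ (mcov R ↥(resAux R ω i).2)) = (resAux R ω (i+1)).2
  rw [LinearMap.ker_comp, Submodule.ker_subtype, Submodule.comap_bot]
  rfl

lemma resAux_le_smul (i : ℕ) :
    (resAux R ω i).2 ≤ (maximalIdeal R) • (⊤ : Submodule R (Fin (resb R ω i) → R)) := by
  cases i with
  | zero => exact mcov_ker R ω
  | succ j => exact mcov_ker R ↥(resAux R ω j).2

lemma res_isMinFreeRes : IsMinFreeRes R ω (resb R ω) (resd R ω) (mcov R ω) := by
  refine ⟨mcov_surj R ω, ?_, ?_, ?_⟩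
  · refine LinearMap.exact_iff.2 ?_
    rw [range_resd]
    rfl
  · intro i
    rw [LinearMap.exact_iff, ker_resd, range_resd]
  · intro i
    rw [range_resd]
    exact resAux_le_smul R ω i
end Resolution


section Count
variable {R : Type u} [CommRing R] [IsLocalRing R]

/-- The socle as an ideal. -/
noncomputable abbrev socI (R : Type u) [CommRing R] [IsLocalRing R] : Ideal R :=
  Submodule.colon (⊥ : Submodule R R) (maximalIdeal R)

lemma soc_smul_le_ker_lcomp {n m : ℕ} (A : (Fin n → R) →ₗ[R] (Fin m → R))
    (hA : LinearMap.range A ≤ (maximalIdeal R) • (⊤ : Submodule R (Fin m → R))) :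
    socI R • (⊤ : Submodule R ((Fin m → R) →ₗ[R] R)) ≤
      LinearMap.ker (LinearMap.lcomp R R A) := by
  refine Submodule.smul_le.2 fun σ hσ g _ => ?_
  rw [LinearMap.mem_ker]
  refine LinearMap.ext fun x => ?_
  have h1 : A x ∈ (maximalIdeal R) • (⊤ : Submodule R (Fin m → R)) := hA ⟨x, rfl⟩
  have h2 : g (A x) ∈ (maximalIdeal R) • (⊤ : Submodule R R) := by
    have h3 : g (A x) ∈ Submodule.map g ((maximalIdeal R) • ⊤) :=
      Submodule.mem_map_of_mem h1
    rw [Submodule.map_smul''] at h3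
    exact (smul_mono_right (maximalIdeal R) le_top :
        (maximalIdeal R) • Submodule.map g ⊤ ≤ (maximalIdeal R) • ⊤) h3
  have : σ • (g (A x)) = 0 := socle_smul_eq_zero hσ h2
  simpa using this

lemma mlength_soc_smul_ge (m : ℕ) :
    (m : ℕ∞) * mlength R ↥(socI R) ≤
      mlength R ↥(socI R • (⊤ : Submodule R ((Fin m → R) →ₗ[R] R))) := by
  set e := LinearEquiv.piRing R R (Fin m) R with he
  have h1 : Submodule.map (e : ((Fin m → R) →ₗ[R] R) →ₗ[R] (Fin m → R))
      (socI R • ⊤) = Submodule.pi Set.univ (fun _ => socI R) := by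
    rw [Submodule.map_smul'', Submodule.map_top, LinearEquiv.range, smul_top_pi]
  have e2 : ↥(socI R • (⊤ : Submodule R ((Fin m → R) →ₗ[R] R))) ≃ₗ[R] (Fin m → ↥(socI R)) :=
    (e.submoduleMap (socI R • ⊤)).trans
      ((LinearEquiv.ofEq _ _ h1).trans (piIdealEquiv (socI R) m))
  rw [mlength_eq_of_equiv (M := ↥(socI R • (⊤ : Submodule R ((Fin m → R) →ₗ[R] R)))) e2]
  exact le_mlength_pi m

variable [IsNoetherianRing R]
variable (R) (ω : Type u) [AddCommGroup ω] [Module R ω] [Module.Finite R ω]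

lemma spot_ineq (i : ℕ)
    (hker : LinearMap.ker (LinearMap.lcomp R R (resd R ω (i+1))) ≤
      LinearMap.range (LinearMap.lcomp R R (resd R ω i))) :
    (resb R ω (i+1) : ℕ∞) * mlength R ↥(socI R) +
      (resb R ω i : ℕ∞) * mlength R ↥(socI R) ≤
        (resb R ω i : ℕ∞) * mlength R R := by
  set δ := LinearMap.lcomp R R (resd R ω i) with hδ
  have hrange : ∀ j, LinearMap.range (resd R ω j) ≤
      (maximalIdeal R) • (⊤ : Submodule R (Fin (resb R ω j) → R)) := by
    intro j
    rw [range_resd]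
    exact resAux_le_smul R ω j
  have h1 : (resb R ω (i+1) : ℕ∞) * mlength R ↥(socI R) ≤
      mlength R ↥(LinearMap.range δ) := by
    refine (mlength_soc_smul_ge (resb R ω (i+1))).trans ?_
    have hle : socI R • (⊤ : Submodule R ((Fin (resb R ω (i+1)) → R) →ₗ[R] R)) ≤
        LinearMap.range δ :=
      le_trans (soc_smul_le_ker_lcomp (resd R ω (i+1)) (hrange (i+1))) hker
    exact mlength_le_of_injective (Submodule.inclusion hle) (Submodule.inclusion_injective hle)
  have h2 : (resb R ω i : ℕ∞) * mlength R ↥(socI R) ≤ mlength R ↥(LinearMap.ker δ) := by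
    refine (mlength_soc_smul_ge (resb R ω i)).trans ?_
    have hle : socI R • (⊤ : Submodule R ((Fin (resb R ω i) → R) →ₗ[R] R)) ≤
        LinearMap.ker δ := soc_smul_le_ker_lcomp (resd R ω i) (hrange i)
    exact mlength_le_of_injective (Submodule.inclusion hle) (Submodule.inclusion_injective hle)
  have h3 := mlength_ker_add_range δ
  have h4 : mlength R ((Fin (resb R ω i) → R) →ₗ[R] R) ≤ (resb R ω i : ℕ∞) * mlength R R := by
    rw [mlength_eq_of_equiv (LinearEquiv.piRing R R (Fin (resb R ω i)) R)]
    exact mlength_pi_le _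
  calc (resb R ω (i+1) : ℕ∞) * mlength R ↥(socI R) + (resb R ω i : ℕ∞) * mlength R ↥(socI R)
      ≤ mlength R ↥(LinearMap.range δ) + mlength R ↥(LinearMap.ker δ) := add_le_add h1 h2
    _ = mlength R ↥(LinearMap.ker δ) + mlength R ↥(LinearMap.range δ) := add_comm _ _
    _ ≤ mlength R ((Fin (resb R ω i) → R) →ₗ[R] R) := h3
    _ ≤ (resb R ω i : ℕ∞) * mlength R R := h4
end Count


section Final
variable {R : Type u} [CommRing R] [IsLocalRing R] [IsNoetherianRing R]
variable (R) (ω : Type u) [AddCommGroup ω] [Module R ω] [Module.Finite R ω]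

lemma resd_range_bot (k : ℕ) (h : resb R ω (k+1) = 0) :
    LinearMap.range (resd R ω k) = ⊥ := by
  refine le_antisymm ?_ bot_le
  rintro y ⟨x, rfl⟩
  have hx : x = 0 := funext fun i => absurd i.2 (by omega)
  rw [hx, map_zero]
  exact Submodule.zero_mem ⊥

lemma soc_smul_le_ker_resd (k : ℕ) :
    socI R • (⊤ : Submodule R (Fin (resb R ω (k+1)) → R)) ≤
      LinearMap.ker (resd R ω k) := by
  refine Submodule.smul_le.2 fun σ hσ x _ => ?_
  rw [LinearMap.mem_ker, map_smul]
  refine socle_smul_eq_zero hσ ?_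
  have h1 : resd R ω k x ∈ LinearMap.range (resd R ω k) := ⟨x, rfl⟩
  rw [range_resd] at h1
  exact resAux_le_smul R ω k h1

lemma back_zero (hsoc : socI R ≠ ⊥) (k : ℕ) (h : resb R ω (k+2) = 0) :
    resb R ω (k+1) = 0 := by
  by_contra hne
  have h1 : (resAux R ω (k+1)).2 = ⊥ := by
    rw [← range_resd, resd_range_bot R ω (k+1) h]
    rfl
  have h2 : LinearMap.ker (resd R ω k) = ⊥ := by rw [ker_resd]; exact h1
  have h3 := (soc_smul_le_ker_resd R ω k).trans h2.le
  obtain ⟨σ, hσ, hσ0⟩ := Submodule.ne_bot_iff _ |>.1 hsoc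
  set i0 : Fin (resb R ω (k+1)) := ⟨0, Nat.pos_of_ne_zero hne⟩ with hi0
  set v : Fin (resb R ω (k+1)) → R := Pi.single i0 1 with hv
  have h4 : σ • v ∈ socI R • (⊤ : Submodule R (Fin (resb R ω (k+1)) → R)) :=
    Submodule.smul_mem_smul hσ Submodule.mem_top
  have h5 : σ • v = 0 := (Submodule.mem_bot R).1 (h3 h4)
  have h6 := congrFun h5 i0
  rw [hv] at h6
  simp [Pi.single_eq_same] at h6
  exact hσ0 h6

lemma nontrivial_ω (hbij : Function.Bijective (algebraMap R (Module.End R ω))) :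
    Nontrivial ω := by
  rcases subsingleton_or_nontrivial ω with h | h
  · exfalso
    have hS : Subsingleton (Module.End R ω) :=
      ⟨fun f g => LinearMap.ext fun x => Subsingleton.elim _ _⟩
    have h0 : (algebraMap R (Module.End R ω)) 0 = algebraMap R (Module.End R ω) 1 :=
      Subsingleton.elim _ _
    exact zero_ne_one (hbij.1 h0)
  · exact h

lemma mu_pos (hnt : Nontrivial ω) : 1 ≤ mu R ω := by
  by_contra h
  have h0 : mu R ω = 0 := by omega
  have hne : {n | ∃ s : Fin n → ω, Submodule.span R (Set.range s) = ⊤}.Nonempty := by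
    obtain ⟨n, s, hs⟩ := Module.Finite.exists_fin (R := R) (M := ω)
    exact ⟨n, s, hs⟩
  obtain ⟨s, hs⟩ : ∃ s : Fin (mu R ω) → ω, Submodule.span R (Set.range s) = ⊤ :=
    Nat.sInf_mem hne
  haveI : IsEmpty (Fin (mu R ω)) := by rw [h0]; infer_instance
  rw [Set.range_eq_empty, Submodule.span_empty] at hs
  obtain ⟨x, y, hxy⟩ := hnt
  have hx : x ∈ (⊤ : Submodule R ω) := Submodule.mem_top
  have hy : y ∈ (⊤ : Submodule R ω) := Submodule.mem_top
  rw [← hs, Submodule.mem_bot] at hx hy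
  exact hxy (hx.trans hy.symm)

lemma rank_one {n : ℕ} (hn : 1 ≤ n) (e : (Fin n → R) ≃ₗ[R] ω)
    (hbij : Function.Bijective (algebraMap R (Module.End R ω))) : n = 1 := by
  by_contra hne
  have h2 : 2 ≤ n := by omega
  set i0 : Fin n := ⟨0, by omega⟩ with hi0
  set i1 : Fin n := ⟨1, by omega⟩ with hi1
  have hi01 : i0 ≠ i1 := by simp [hi0, hi1, Fin.ext_iff]
  set ψ : (Fin n → R) →ₗ[R] (Fin n → R) :=
    (LinearMap.single R (fun _ : Fin n => R) i0).comp
      (LinearMap.proj (R := R) (φ := fun _ : Fin n => R) i1) with hψ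
  set φ : Module.End R ω := e.toLinearMap ∘ₗ ψ ∘ₗ e.symm.toLinearMap with hφ
  obtain ⟨r, hr⟩ := hbij.2 φ
  have key := congrArg (fun F : Module.End R ω => F (e (Pi.single (M := fun _ : Fin n => R) i1 1))) hr
  simp only [hφ, Module.algebraMap_end_apply, LinearMap.comp_apply,
    LinearEquiv.coe_coe, LinearEquiv.symm_apply_apply] at key
  have hψval : ψ (Pi.single (M := fun _ : Fin n => R) i1 1) = Pi.single (M := fun _ : Fin n => R) i0 1 := by
    simp [hψ, LinearMap.single_apply, Pi.single_eq_same]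
  rw [hψval, ← map_smul] at key
  have h3 : (r • Pi.single (M := fun _ : Fin n => R) i1 1 : Fin n → R) = Pi.single (M := fun _ : Fin n => R) i0 1 := e.injective key
  have h4 := congrFun h3 i0
  rw [Pi.smul_apply, Pi.single_eq_same, Pi.single_eq_of_ne hi01, smul_zero] at h4
  exact zero_ne_one h4
end Final


/-- Tachikawa-type criterion: if `R` is an Artinian local ring with canonical module
`ω` (the injective hull of the residue field) such that `2·dim_k socle(R) > ℓ(R)`
and `Ext^i_R(ω, R) = 0` for `1 ≤ i ≤ μ(ω)`, then `R` is Gorenstein. -/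
theorem gorenstein_of_large_socle_and_ext_vanishing
    (R : Type u) [CommRing R] [IsLocalRing R] [IsArtinianRing R] [IsNoetherianRing R]
    (ω : Type u) [AddCommGroup ω] [Module R ω] [Module.Finite R ω]
    (hω : IsCanonicalModule R ω)
    (hsocle : mlength R R <
      2 * mlength R (↥(Submodule.colon (⊥ : Submodule R R) (maximalIdeal R))))
    (hext : ∀ j, 1 ≤ j → j ≤ mu R ω → ExtVanishesSucc R ω R (j-1)) :
    IsGorensteinLocalRing R := by
  classical
  -- lengths as naturals
  have hfin : mlength R R ≠ ⊤ := by
    intro h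
    rw [h] at hsocle
    exact not_top_lt hsocle
  obtain ⟨L, hL⟩ : ∃ L : ℕ, mlength R R = (L : ℕ∞) := by
    rcases (WithTop.ne_top_iff_exists).1 hfin with ⟨L, hL⟩
    exact ⟨L, hL.symm⟩
  have hsle : mlength R ↥(socI R) ≤ mlength R R :=
    mlength_le_of_injective (socI R).subtype (Submodule.injective_subtype _)
  obtain ⟨S, hS⟩ : ∃ S : ℕ, mlength R ↥(socI R) = (S : ℕ∞) := by
    rcases (WithTop.ne_top_iff_exists).1 (fun h => hfin (top_le_iff.1 (h ▸ hsle))) with ⟨S, hS⟩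
    exact ⟨S, hS.symm⟩
  have hLS : L < 2 * S := by
    have h := hsocle
    rw [show mlength R ↥(Submodule.colon (⊥ : Submodule R R) (maximalIdeal R))
      = mlength R ↥(socI R) from rfl, hS, hL] at h
    exact_mod_cast h
  have hSL : S ≤ L := by
    have := hsle
    rw [hS, hL] at this
    exact_mod_cast this
  have hSpos : 1 ≤ S := by omega
  -- socle is nonzero
  have hsoc_ne : socI R ≠ ⊥ := by
    intro h
    have hsub : Subsingleton ↥(socI R) := by rw [h]; infer_instance
    rw [mlength_subsingleton] at hS
    have hS0 : S = 0 := by exact_mod_cast hS.symm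
    omega
  
  -- nontrivial ω, mu positive
  have hωnt : Nontrivial ω := nontrivial_ω R ω hω.2.2
  have htpos : 1 ≤ mu R ω := mu_pos R ω hωnt
  set t := mu R ω with ht
  have hres := res_isMinFreeRes R ω
  -- exactness of the dual complex at spots 1..t
  have hexact : ∀ i, i + 1 ≤ t →
      LinearMap.ker (LinearMap.lcomp R R (resd R ω (i+1))) ≤
        LinearMap.range (LinearMap.lcomp R R (resd R ω i)) := by
    intro i hi g hg
    have hv : ExtVanishesSucc R ω R i := by
      have := hext (i+1) (by omega) (by omega)
      simpa using this
    have hg0 : g.comp (resd R ω (i+1)) = 0 := by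
      have := LinearMap.mem_ker.1 hg
      exact this
    obtain ⟨h, hh⟩ := hv (resb R ω) (resd R ω) (mcov R ω) hres g hg0
    refine ⟨h, ?_⟩
    rw [show (LinearMap.lcomp R R (resd R ω i)) h = h.comp (resd R ω i) from rfl]
    exact hh.symm
  -- numeric inequalities
  have hnat : ∀ i, i + 1 ≤ t →
      resb R ω (i+1) * S + resb R ω i * S ≤ resb R ω i * L := by
    intro i hi
    have h := spot_ineq R ω i (hexact i hi)
    rw [hS, hL] at h
    exact_mod_cast h
  have hstep : ∀ i, i + 1 ≤ t → (resb R ω (i+1) < resb R ω i ∨ resb R ω (i+1) = 0) := by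
    intro i hi
    have h := hnat i hi
    rcases Nat.eq_zero_or_pos (resb R ω i) with h0 | h0
    · right
      rw [h0] at h
      simp only [Nat.zero_mul, Nat.add_zero, Nat.mul_zero] at h
      rcases Nat.mul_eq_zero.1 (Nat.le_zero.1 h) with h1 | h1
      · exact h1
      · omega
    · left
      have k1 : resb R ω i * (L+1) ≤ resb R ω i * (2*S) := Nat.mul_le_mul_left _ (by omega)
      by_contra hnot
      push_neg at hnot
      have k2 : resb R ω i * S ≤ resb R ω (i+1) * S := Nat.mul_le_mul_right _ hnot
      nlinarith [h, k1, k2, h0]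
  -- resb t = 0
  have hbzero : ∀ j, j ≤ t → resb R ω j + j ≤ t ∨ resb R ω j = 0 := by
    intro j
    induction j with
    | zero =>
      intro _
      left
      have h0 : resb R ω 0 = t := rfl
      omega
    | succ j ih =>
      intro hj
      rcases ih (by omega) with hc | hc
      · rcases hstep j hj with h1 | h1
        · left; omega
        · right; exact h1
      · rcases hstep j hj with h1 | h1
        · right; omega
        · right; exact h1
  have hbt : resb R ω t = 0 := by
    rcases hbzero t (le_refl t) with h | h
    · omega
    · exact h
  -- backward induction: all Betti numbers from 1 to t vanish
  have hback : ∀ dd k, k + dd = t → 1 ≤ k → resb R ω k = 0 := by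
    intro dd
    induction dd with
    | zero =>
      intro k hk _
      rw [show k = t by omega]
      exact hbt
    | succ dd ih =>
      intro k hk hk1
      have h1 : resb R ω (k+1) = 0 := ih (k+1) (by omega) (by omega)
      obtain ⟨kk, rfl⟩ : ∃ kk, k = kk + 1 := ⟨k - 1, by omega⟩
      exact back_zero R ω hsoc_ne kk h1
  have hb1 : resb R ω 1 = 0 := hback (t - 1) 1 (by omega) (le_refl 1)
  -- the cover of ω is injective
  have hker : LinearMap.ker (mcov R ω) = ⊥ := by
    have h1 : LinearMap.range (resd R ω 0) = ⊥ := resd_range_bot R ω 0 hb1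
    have h2 : LinearMap.ker (mcov R ω) = LinearMap.range (resd R ω 0) := by
      rw [range_resd]
      rfl
    rw [h2, h1]
    rfl
  have hbij : Function.Bijective (mcov R ω) :=
    ⟨LinearMap.ker_eq_bot.1 hker, mcov_surj R ω⟩
  have hmu1 : mu R ω = 1 :=
    rank_one R ω htpos (LinearEquiv.ofBijective (mcov R ω) hbij) hω.2.2
  haveI : Unique (Fin (mu R ω)) := by rw [hmu1]; infer_instance
  set eR : R ≃ₗ[R] ω :=
    (LinearEquiv.funUnique (Fin (mu R ω)) R R).symm.trans
      (LinearEquiv.ofBijective (mcov R ω) hbij) with heR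
  -- transport finite injective dimension from ω to R
  obtain ⟨n, I, dI, εI, hinj, hInj, hex0, hexs, hbound⟩ := hω.2.1
  refine ⟨inferInstance, n, I, dI, εI ∘ₗ (eR : R →ₗ[R] ω),
    hinj.comp eR.injective, hInj, ?_, hexs, hbound⟩
  rw [LinearMap.exact_iff] at hex0 ⊢
  rw [LinearMap.range_comp, LinearEquiv.range, Submodule.map_top]
  exact hex0
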